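/- For every N ≥ 1 and every integer M with 0 ≤ M ≤ N, it holds that P[∑_{k=0}^{N−1} φ_k ≥ M] ≥ 1 − ∑_{m=0}^{M−1} (N choose m)·(1 − p)^{N−m}. (Paper's Proposition 6, with the conditional success-probability lower bound p = 2q^γ abstracted as a hypothesis.) -/

import Mathlib

open MeasureTheory
open Finset

lemma binomB {p : ℝ} (hp1 : p ≤ 1) (N M : ℕ) :
    p * ∑ m ∈ range M, (N.choose m : ℝ) * (1-p)^(N-m)
      + (1-p) * ∑ m ∈ range (M+1), (N.choose m : ℝ) * (1-p)^(N-m)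
    ≤ ∑ m ∈ range (M+1), ((N+1).choose m : ℝ) * (1-p)^(N+1-m) := by
  have h1p : (0:ℝ) ≤ 1 - p := by linarith
  have hBnn : 0 ≤ ∑ m ∈ range M, (N.choose m : ℝ) * (1-p)^(N-m) :=
    Finset.sum_nonneg fun m _ => mul_nonneg (Nat.cast_nonneg _) (pow_nonneg h1p _)
  have key : ∑ m ∈ range (M+1), ((N+1).choose m : ℝ) * (1-p)^(N+1-m)
      = ∑ m ∈ range M, (N.choose m : ℝ) * (1-p)^(N-m)
        + (1-p) * ∑ m ∈ range (M+1), (N.choose m : ℝ) * (1-p)^(N-m) := by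
    rw [Finset.sum_range_succ' (fun m => ((N+1).choose m : ℝ) * (1-p)^(N+1-m)) M]
    rw [Finset.mul_sum, Finset.sum_range_succ'
      (fun m => (1-p) * ((N.choose m : ℝ) * (1-p)^(N-m))) M]
    have e1 : ∀ m ∈ range M, ((N+1).choose (m+1) : ℝ) * (1-p)^(N+1-(m+1))
        = (N.choose m : ℝ) * (1-p)^(N-m)
          + (1-p) * ((N.choose (m+1) : ℝ) * (1-p)^(N-(m+1))) := by
      intro m _
      rw [Nat.choose_succ_succ]
      push_cast
      rcases le_or_gt (m+1) N with h | h
      · have h3 : N - m = (N - (m+1)) + 1 := by omega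
        rw [h3]; ring
      · have h0 : N.choose (m+1) = 0 := Nat.choose_eq_zero_of_lt h
        have hm : N - m = 0 := by omega
        have hm1 : N - (m+1) = 0 := by omega
        rw [h0, hm, hm1]; push_cast; ring
    rw [Finset.sum_congr rfl e1, Finset.sum_add_distrib]
    simp [pow_succ]
    ring
  rw [key]
  nlinarith

theorem mainlem {Ω : Type*} {F : MeasurableSpace Ω} (P : Measure Ω) [IsProbabilityMeasure P]
    (H : ℕ → MeasurableSpace Ω) (hHle : ∀ k, H k ≤ F) (hHmono : Monotone H)
    (p : ℝ) (hp0 : 0 ≤ p) (hp1 : p ≤ 1)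
    (φ : ℕ → Ω → ℝ) (hφ01 : ∀ k ω, φ k ω = 0 ∨ φ k ω = 1)
    (hadapted : ∀ k, Measurable[H k] (φ k))
    (hcond : ∀ k : ℕ,
      (fun _ => p) ≤ᵐ[P]
        MeasureTheory.condExp (Nat.casesOn k (⊥ : MeasurableSpace Ω) H) P (φ k)) :
    ∀ N M : ℕ, (P {ω | ∑ k ∈ range N, φ k ω < (M:ℝ)}).toReal
      ≤ ∑ m ∈ range M, (N.choose m : ℝ) * (1-p)^(N-m) := by
  have hφF : ∀ k, Measurable (φ k) := fun k => (hadapted k).mono (hHle k) le_rfl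
  have hφ0 : ∀ k ω, 0 ≤ φ k ω := fun k ω => by rcases hφ01 k ω with h|h <;> rw [h] <;> norm_num
  have hφle1 : ∀ k ω, φ k ω ≤ 1 := fun k ω => by rcases hφ01 k ω with h|h <;> rw [h] <;> norm_num
  have hSmeas : ∀ N, Measurable (fun ω => ∑ k ∈ range N, φ k ω) :=
    fun N => Finset.measurable_sum _ fun k _ => hφF k
  have hS0 : ∀ N ω, 0 ≤ ∑ k ∈ range N, φ k ω :=
    fun N ω => Finset.sum_nonneg fun k _ => hφ0 k ω
  have hInt : ∀ k, Integrable (φ k) P :=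
    fun k => (integrable_const 1).mono' (hφF k).aestronglyMeasurable
      (ae_of_all _ fun ω => by
        rw [Real.norm_eq_abs, abs_of_nonneg (hφ0 k ω)]; exact hφle1 k ω)
  have hprev_le : ∀ N, (Nat.casesOn N ⊥ H : MeasurableSpace Ω) ≤ F := by
    intro N; cases N with
    | zero => exact bot_le
    | succ n => exact hHle n
  have hSprev : ∀ N, Measurable[Nat.casesOn N ⊥ H] (fun ω => ∑ k ∈ range N, φ k ω) := by
    intro N; cases N with
    | zero => simpa using @measurable_const ℝ Ω _ ⊥ 0
    | succ n =>
        exact Finset.measurable_sum _ fun k hk =>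
          (hadapted k).mono (hHmono (by simp at hk; omega)) le_rfl
  have hkey : ∀ k (B : Set Ω), MeasurableSet[Nat.casesOn k ⊥ H] B →
      p * (P B).toReal ≤ ∫ ω in B, φ k ω ∂P := by
    intro k B hB
    have h1 : ∫ ω in B, φ k ω ∂P
        = ∫ ω in B, (MeasureTheory.condExp (Nat.casesOn k ⊥ H) P (φ k)) ω ∂P :=
      (setIntegral_condExp (hprev_le k) (hInt k) hB).symm
    have h2 : ∫ ω in B, (fun _ => p) ω ∂P
        ≤ ∫ ω in B, (MeasureTheory.condExp (Nat.casesOn k ⊥ H) P (φ k)) ω ∂P :=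
      setIntegral_mono_ae (integrableOn_const (measure_ne_top _ _))
        integrable_condExp.integrableOn (hcond k)
    rw [h1]
    calc p * (P B).toReal = ∫ _ω in B, p ∂P := by rw [setIntegral_const, smul_eq_mul, measureReal_def]; ring
    _ ≤ _ := h2
  intro N
  induction N with
  | zero =>
      intro M
      cases M with
      | zero => simp
      | succ M' =>
          have h1 : (P {ω | ∑ k ∈ range 0, φ k ω < ((M'+1:ℕ):ℝ)}).toReal ≤ 1 := by
            have := prob_le_one (μ := P) (s := {ω | ∑ k ∈ range 0, φ k ω < ((M'+1:ℕ):ℝ)})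
            have h2 := ENNReal.toReal_mono (by norm_num) this
            simpa using h2
          have h3 : (1:ℝ) ≤ ∑ m ∈ range (M'+1), ((0:ℕ).choose m : ℝ) * (1-p)^(0-m) := by
            rw [Finset.sum_range_succ' (fun m => (((0:ℕ).choose m : ℝ)) * (1-p)^(0-m)) M']
            have h4 : ∀ m ∈ range M', (((0:ℕ).choose (m+1) : ℝ)) * (1-p)^(0-(m+1)) = 0 := by
              intro m _; simp
            rw [Finset.sum_congr rfl h4]; simp
          linarith
  | succ N ih =>
      intro M
      cases M with
      | zero =>
          have he : {ω | ∑ k ∈ range (N+1), φ k ω < ((0:ℕ):ℝ)} = ∅ := by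
            ext ω
            simp only [Set.mem_setOf_eq, Set.mem_empty_iff_false, iff_false, not_lt,
              Nat.cast_zero]
            exact hS0 (N+1) ω
          rw [he]; simp
      | succ M' =>
          have h1p : (0:ℝ) ≤ 1 - p := by linarith
          set s1 : Set Ω := {ω | ∑ k ∈ range N, φ k ω < ((M':ℕ):ℝ)} with hs1def
          set s2 : Set Ω := {ω | ∑ k ∈ range N, φ k ω < ((M'+1:ℕ):ℝ)} with hs2def
          set Bs : Set Ω := s2 \ s1 with hBdef
          set A : Set Ω := {ω | ∑ k ∈ range (N+1), φ k ω < ((M'+1:ℕ):ℝ)} with hAdef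
          have hs1m : MeasurableSet s1 := measurableSet_lt (hSmeas N) measurable_const
          have hs2m : MeasurableSet s2 := measurableSet_lt (hSmeas N) measurable_const
          have hBm : MeasurableSet Bs := hs2m.diff hs1m
          have hAm : MeasurableSet A := measurableSet_lt (hSmeas (N+1)) measurable_const
          have hs1prev : MeasurableSet[Nat.casesOn N ⊥ H] s1 :=
            (hSprev N) measurableSet_Iio
          have hs2prev : MeasurableSet[Nat.casesOn N ⊥ H] s2 :=
            (hSprev N) measurableSet_Iio
          have hBprev : MeasurableSet[Nat.casesOn N ⊥ H] Bs :=
            MeasurableSet.diff hs2prev hs1prev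
          have hpoint : ∀ ω, A.indicator (1 : Ω → ℝ) ω
              ≤ s1.indicator (1 : Ω → ℝ) ω + Bs.indicator (fun ω => 1 - φ N ω) ω := by
            intro ω
            have hBnn : 0 ≤ Bs.indicator (fun ω => 1 - φ N ω) ω :=
              Set.indicator_nonneg (fun ω _ => by linarith [hφle1 N ω]) ω
            have hA1 : A.indicator (1 : Ω → ℝ) ω ≤ 1 := by
              by_cases hA : ω ∈ A <;> simp [hA]
            by_cases h1 : ω ∈ s1
            · simp only [Set.indicator_of_mem h1, Pi.one_apply]
              linarith
            · by_cases hA : ω ∈ A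
              · have hωA : ∑ k ∈ range (N+1), φ k ω < ((M'+1:ℕ):ℝ) := hA
                rw [Finset.sum_range_succ] at hωA
                have hMle : ((M':ℕ):ℝ) ≤ ∑ k ∈ range N, φ k ω := le_of_not_gt h1
                have hφN : φ N ω = 0 := by
                  rcases hφ01 N ω with h|h
                  · exact h
                  · exfalso; rw [h] at hωA; push_cast at hωA hMle; linarith
                have hωB : ω ∈ Bs := by
                  constructor
                  · show ∑ k ∈ range N, φ k ω < ((M'+1:ℕ):ℝ)
                    have := hφ0 N ω
                    push_cast at hωA ⊢; linarith
                  · exact h1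
                rw [Set.indicator_of_mem hA, Set.indicator_of_notMem h1,
                  Set.indicator_of_mem hωB, hφN, Pi.one_apply]
                norm_num
              · rw [Set.indicator_of_notMem hA, Set.indicator_of_notMem h1]
                linarith
          have hint1 : Integrable (A.indicator (1 : Ω → ℝ)) P :=
            (integrable_const 1).indicator hAm
          have hint2 : Integrable (s1.indicator (1 : Ω → ℝ)) P :=
            (integrable_const 1).indicator hs1m
          have hint3 : Integrable (Bs.indicator (fun ω => 1 - φ N ω)) P :=
            ((integrable_const 1).sub (hInt N)).indicator hBm
          have hstep1 : (P A).toReal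
              ≤ (P s1).toReal + ∫ ω in Bs, (1 - φ N ω) ∂P := by
            have e1 : (P A).toReal = ∫ ω, A.indicator (1 : Ω → ℝ) ω ∂P := by
              rw [integral_indicator_one hAm, measureReal_def]
            have e2 : ∫ ω, (s1.indicator (1 : Ω → ℝ) ω
                  + Bs.indicator (fun ω => 1 - φ N ω) ω) ∂P
                = (P s1).toReal + ∫ ω in Bs, (1 - φ N ω) ∂P := by
              rw [integral_add hint2 hint3, integral_indicator_one hs1m,
                integral_indicator hBm, measureReal_def]
            rw [e1, ← e2]
            exact integral_mono hint1 (hint2.add hint3) hpoint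
          have hstep2 : ∫ ω in Bs, (1 - φ N ω) ∂P ≤ (1-p) * (P Bs).toReal := by
            have e1 : ∫ ω in Bs, (1 - φ N ω) ∂P
                = (P Bs).toReal - ∫ ω in Bs, φ N ω ∂P := by
              rw [integral_sub (integrableOn_const (C := (1:ℝ)) (measure_ne_top P Bs))
                (hInt N).integrableOn, setIntegral_const, smul_eq_mul, mul_one, measureReal_def]
            rw [e1]
            have hk := hkey N Bs hBprev
            have e2 : (1-p) * (P Bs).toReal = (P Bs).toReal - p * (P Bs).toReal := by ring
            linarith
          have hstep3 : (P s1).toReal + (P Bs).toReal = (P s2).toReal := by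
            have hsub : s1 ⊆ s2 := by
              intro ω hω
              show ∑ k ∈ range N, φ k ω < ((M'+1:ℕ):ℝ)
              have hω' : ∑ k ∈ range N, φ k ω < ((M':ℕ):ℝ) := hω
              push_cast at hω' ⊢; linarith
            have hdisj : Disjoint s1 Bs := Set.disjoint_sdiff_right
            rw [← ENNReal.toReal_add (measure_ne_top _ _) (measure_ne_top _ _),
              ← measure_union hdisj hBm, Set.union_diff_cancel hsub]
          have ih1 := ih M'
          rw [← hs1def] at ih1
          have ih2 := ih (M'+1)
          rw [← hs2def] at ih2
          have hfin : (P A).toReal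
              ≤ p * (P s1).toReal + (1-p) * (P s2).toReal := by
            have e : p * (P s1).toReal + (1-p) * (P s2).toReal
                = (P s1).toReal + (1-p) * (P Bs).toReal := by
              rw [← hstep3]; ring
            linarith
          calc (P A).toReal ≤ p * (P s1).toReal + (1-p) * (P s2).toReal := hfin
            _ ≤ p * (∑ m ∈ range M', (N.choose m : ℝ) * (1-p)^(N-m))
                + (1-p) * (∑ m ∈ range (M'+1), (N.choose m : ℝ) * (1-p)^(N-m)) := by
                have g1 := mul_le_mul_of_nonneg_left ih1 hp0
                have g2 := mul_le_mul_of_nonneg_left ih2 h1p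
                linarith
            _ ≤ _ := binomB hp1 N M'

/-- Paper's Proposition 6 (abstracted): if the `{0,1}`-valued variables `φ k` are adapted to
the filtration `H` and satisfy `E[φ k | H (k−1)] ≥ p` a.s. (with `H (−1)` the trivial
σ-algebra), then `P[∑_{k<N} φ k ≥ M] ≥ 1 − ∑_{m<M} (N choose m) (1 − p)^{N−m}`. -/
theorem stmt6 {Ω : Type*} {F : MeasurableSpace Ω} (P : Measure Ω) [IsProbabilityMeasure P]
    (H : ℕ → MeasurableSpace Ω) (hHle : ∀ k, H k ≤ F) (hHmono : Monotone H)
    (p : ℝ) (hp0 : 0 ≤ p) (hp1 : p ≤ 1)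
    (φ : ℕ → Ω → ℝ) (hφ01 : ∀ k ω, φ k ω = 0 ∨ φ k ω = 1)
    (hadapted : ∀ k, Measurable[H k] (φ k))
    (hcond : ∀ k : ℕ,
      (fun _ => p) ≤ᵐ[P]
        MeasureTheory.condExp (Nat.casesOn k (⊥ : MeasurableSpace Ω) H) P (φ k)) :
    ∀ N : ℕ, 1 ≤ N → ∀ M : ℕ, M ≤ N →
      ENNReal.ofReal (1 - ∑ m ∈ Finset.range M, (N.choose m : ℝ) * (1 - p) ^ (N - m))
        ≤ P {ω | (M : ℝ) ≤ ∑ k ∈ Finset.range N, φ k ω} := by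
  intro N _hN M _hM
  have main := mainlem P H hHle hHmono p hp0 hp1 φ hφ01 hadapted hcond N M
  set s : Set Ω := {ω | ∑ k ∈ Finset.range N, φ k ω < (M:ℝ)} with hsdef
  have hφF : ∀ k, Measurable (φ k) := fun k => (hadapted k).mono (hHle k) le_rfl
  have hsm : MeasurableSet s :=
    measurableSet_lt (Finset.measurable_sum _ fun k _ => hφF k) measurable_const
  have hcompl : {ω | (M : ℝ) ≤ ∑ k ∈ Finset.range N, φ k ω} = sᶜ := by
    ext ω; simp [hsdef, not_lt]
  rw [hcompl]
  have h1 : (P s).toReal + (P sᶜ).toReal = 1 := by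
    rw [← ENNReal.toReal_add (measure_ne_top _ _) (measure_ne_top _ _),
      measure_add_measure_compl hsm]
    simp
  have h2 : ENNReal.ofReal ((P sᶜ).toReal) = P sᶜ :=
    ENNReal.ofReal_toReal (measure_ne_top _ _)
  calc ENNReal.ofReal (1 - ∑ m ∈ Finset.range M, (N.choose m : ℝ) * (1 - p) ^ (N - m))
      ≤ ENNReal.ofReal ((P sᶜ).toReal) := ENNReal.ofReal_le_ofReal (by linarith)
    _ = P sᶜ := h2
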